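/- Let m, n be positive integers with m ≥ 2 and n ≥ 3, and let G = C_m ⊕ C_{mn}. Then there exists a sequence S over G of length 2m + 2mn − 4 (which equals s(G) − 1) that has no zero-sum subsequence of length mn = exp(G), and such that the multiplicity of every element g ∈ G in S is strictly less than mn − 1 = exp(G) − 1. -/

import Mathlib

/-- For `G = C_m ⊕ C_{mn}` with `m ≥ 2` and `n ≥ 3`, there is a sequence of
length `2m + 2mn - 4 = s(G) - 1` with no zero-sum subsequence of length `mn = exp(G)` in
which every element has multiplicity strictly less than `mn - 1 = exp(G) - 1`. -/
theorem stmt_8 (m n : ℕ) (hm : 2 ≤ m) (hn : 3 ≤ n) :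
    ∃ S : Multiset (ZMod m × ZMod (m * n)),
      S.card = 2 * m + 2 * (m * n) - 4 ∧
      (¬ ∃ T ≤ S, T.sum = 0 ∧ Multiset.card T = m * n) ∧
      ∀ g : ZMod m × ZMod (m * n), S.count g < m * n - 1 := by
  have hq : 3 * m ≤ m * n := by nlinarith
  haveI : Fact (1 < m) := ⟨by omega⟩
  haveI : Fact (1 < m * n) := ⟨by omega⟩
  set x1 : ZMod m × ZMod (m * n) := (1, 0) with hx1
  set x2 : ZMod m × ZMod (m * n) := (0, 0) with hx2
  set x3 : ZMod m × ZMod (m * n) := (1, 1) with hx3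
  set x4 : ZMod m × ZMod (m * n) := (0, 1) with hx4
  have h1m : (1 : ZMod m) ≠ 0 := one_ne_zero
  have h1q : (1 : ZMod (m * n)) ≠ 0 := one_ne_zero
  have d12 : x1 ≠ x2 := by simp [hx1, hx2, Prod.ext_iff, h1m]
  have d13 : x1 ≠ x3 := by simp [hx1, hx3, Prod.ext_iff, h1q.symm]
  have d14 : x1 ≠ x4 := by simp [hx1, hx4, Prod.ext_iff, h1m]
  have d23 : x2 ≠ x3 := by simp [hx2, hx3, Prod.ext_iff, h1m.symm]
  have d24 : x2 ≠ x4 := by simp [hx2, hx4, Prod.ext_iff, h1q.symm]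
  have d34 : x3 ≠ x4 := by simp [hx3, hx4, Prod.ext_iff, h1m]
  refine ⟨Multiset.replicate (2*m-1) x1 + Multiset.replicate (m*n-m-1) x2 +
      Multiset.replicate (2*m-1) x3 + Multiset.replicate (m*n-m-1) x4, ?_, ?_, ?_⟩
  · simp only [Multiset.card_add, Multiset.card_replicate]
    omega
  · rintro ⟨T, hTS, hsum, hcard⟩
    set a := T.count x1 with ha
    set b := T.count x2 with hb
    set c := T.count x3 with hc
    set d := T.count x4 with hd
    have hcount : ∀ g, T.count g ≤ _ := fun g => Multiset.count_le_of_le g hTS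
    have hba : a ≤ 2*m-1 := by
      have := hcount x1
      simpa [Multiset.count_add, Multiset.count_replicate,
        d12, d13, d14, d12.symm, d13.symm, d14.symm] using this
    have hbb : b ≤ m*n-m-1 := by
      have := hcount x2
      simpa [Multiset.count_add, Multiset.count_replicate,
        d12, d23, d24, d12.symm, d23.symm, d24.symm] using this
    have hbc : c ≤ 2*m-1 := by
      have := hcount x3
      simpa [Multiset.count_add, Multiset.count_replicate,
        d13, d23, d34, d13.symm, d23.symm, d34.symm] using this
    have hbd : d ≤ m*n-m-1 := by
      have := hcount x4
      simpa [Multiset.count_add, Multiset.count_replicate,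
        d14, d24, d34, d14.symm, d24.symm, d34.symm] using this
    have hdec : T = Multiset.replicate a x1 + Multiset.replicate b x2 +
        Multiset.replicate c x3 + Multiset.replicate d x4 := by
      ext g
      simp only [Multiset.count_add, Multiset.count_replicate]
      by_cases e1 : x1 = g
      · subst e1
        simp [ha, d12, d13, d14, d12.symm, d13.symm, d14.symm]
      by_cases e2 : x2 = g
      · subst e2
        simp [hb, d12, d23, d24, d12.symm, d23.symm, d24.symm]
      by_cases e3 : x3 = g
      · subst e3
        simp [hc, d13, d23, d34, d13.symm, d23.symm, d34.symm]
      by_cases e4 : x4 = g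
      · subst e4
        simp [hd, d14, d24, d34, d14.symm, d24.symm, d34.symm]
      · have h0 := hcount g
        simp only [Multiset.count_add, Multiset.count_replicate,
          if_neg e1, if_neg e2, if_neg e3, if_neg e4, add_zero] at h0 ⊢
        exact Nat.le_zero.mp h0
    have hcard' : a + b + c + d = m * n := by
      rw [hdec] at hcard
      simpa [Multiset.card_add, Multiset.card_replicate] using hcard
    rw [hdec] at hsum
    simp only [Multiset.sum_add, Multiset.sum_replicate, hx1, hx2, hx3, hx4,
      Prod.smul_mk, smul_zero, Prod.mk_add_mk, add_zero, zero_add, Prod.mk_eq_zero,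
      nsmul_eq_mul, mul_one] at hsum
    obtain ⟨hs1, hs2⟩ := hsum
    haveI : NeZero m := ⟨by omega⟩
    haveI : NeZero (m * n) := ⟨by omega⟩
    have hdm : m ∣ a + c := by
      have : ((a + c : ℕ) : ZMod m) = 0 := by push_cast; exact hs1
      exact (ZMod.natCast_eq_zero_iff _ _).mp this
    have hdq : m * n ∣ c + d := by
      have : ((c + d : ℕ) : ZMod (m * n)) = 0 := by push_cast; exact hs2
      exact (ZMod.natCast_eq_zero_iff _ _).mp this
    obtain ⟨k, hk⟩ := hdm
    obtain ⟨l, hl⟩ := hdq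
    have key : ∀ j : ℕ, ¬ (m + 1 ≤ m * j ∧ m * j ≤ 2 * m - 1) := by
      rintro j ⟨hj1, hj2⟩
      rcases Nat.lt_or_ge j 2 with hj | hj
      · have : m * j ≤ m * 1 := Nat.mul_le_mul_left m (by omega)
        omega
      · have : m * 2 ≤ m * j := Nat.mul_le_mul_left m hj
        omega
    have hl1 : l ≤ 1 := by
      rcases Nat.lt_or_ge l 2 with h | h
      · omega
      · have : m * n * 2 ≤ m * n * l := Nat.mul_le_mul_left (m * n) h
        omega
    interval_cases l
    · -- c + d = 0, so a ≥ m+1, m ∣ a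
      have hc0 : c = 0 := by omega
      have hd0 : d = 0 := by omega
      exact key k ⟨by omega, by omega⟩
    · -- c + d = m*n, so a = b = 0, c ≥ m+1, m ∣ c
      have ha0 : a = 0 := by omega
      exact key k ⟨by omega, by omega⟩
  · intro g
    simp only [Multiset.count_add, Multiset.count_replicate]
    split_ifs <;> first | omega | simp_all
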